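/- Let I be the padded instance of an SMI instance I'. A matching M of I is a WSNM of I if and only if M is a semi-WSNM of I with maximum pair (m_{n+1}, w_{n+1}); consequently opt(I) = X(n+1, n+1). -/
import Mathlib


open scoped Classical

/-- An SMTI instance: men of type `Mty`, women of type `Wty`.
`mpref m w = some r` means `w` appears on `m`'s preference list with rank `r`
(smaller rank = more preferred; equal ranks = tied); `none` means `w` is not on `m`'s list.
Similarly for `wpref`.  A pair is acceptable when each lists the other. -/
structure SMTI (Mty : Type) (Wty : Type) where
  mpref : Mty → Wty → Option ℕ
  wpref : Wty → Mty → Option ℕ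

namespace SMTI

variable {Mty Wty : Type}

/-- Rank of an optional preference-list entry: `⊤` for an absent entry
(so that being single / unacceptable is worse than any listed partner). -/
def rk (o : Option ℕ) : ℕ∞ := o.elim ⊤ (fun r => (r : ℕ∞))

/-- `(m, w)` is an acceptable pair. -/
def Acc (I : SMTI Mty Wty) (m : Mty) (w : Wty) : Prop :=
  (I.mpref m w).isSome ∧ (I.wpref w m).isSome

/-- `M` is a matching: a set of acceptable pairs in which each person appears at most once. -/
def IsMatching (I : SMTI Mty Wty) (M : Finset (Mty × Wty)) : Prop :=
  (∀ p ∈ M, I.Acc p.1 p.2) ∧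
  (∀ p ∈ M, ∀ q ∈ M, (p.1 = q.1 ∨ p.2 = q.2) → p = q)

/-- Two pairs cross iff one pair's man is above the other pair's man
while its woman is below the other pair's woman. -/
def Crossing [Preorder Mty] [Preorder Wty] (p q : Mty × Wty) : Prop :=
  (p.1 < q.1 ∧ q.2 < p.2) ∨ (q.1 < p.1 ∧ p.2 < q.2)

/-- A set of pairs is noncrossing if no two of its pairs cross. -/
def Noncrossing [Preorder Mty] [Preorder Wty] (M : Finset (Mty × Wty)) : Prop :=
  ∀ p ∈ M, ∀ q ∈ M, ¬ Crossing p q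

/-- `(m, w)` is a (weak) blocking pair for `M`: an acceptable pair not in `M`
such that `m` strictly prefers `w` to his partner in `M` (or is single) and
`w` strictly prefers `m` to her partner in `M` (or is single). -/
def Blocks (I : SMTI Mty Wty) (M : Finset (Mty × Wty)) (m : Mty) (w : Wty) : Prop :=
  I.Acc m w ∧ (m, w) ∉ M ∧
  (∀ w', (m, w') ∈ M → rk (I.mpref m w) < rk (I.mpref m w')) ∧
  (∀ m', (m', w) ∈ M → rk (I.wpref w m) < rk (I.wpref w m'))

/-- A noncrossing (weak) blocking pair: a blocking pair crossing no pair of `M`. -/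
def NCBlocks [Preorder Mty] [Preorder Wty] (I : SMTI Mty Wty) (M : Finset (Mty × Wty))
    (m : Mty) (w : Wty) : Prop :=
  I.Blocks M m w ∧ ∀ q ∈ M, ¬ Crossing (m, w) q

/-- A strongly stable noncrossing matching (for SMTI in the weak-stability sense:
a weak-SSNM): a noncrossing matching admitting no (weak) blocking pair at all. -/
def IsSSNM [Preorder Mty] [Preorder Wty] (I : SMTI Mty Wty) (M : Finset (Mty × Wty)) : Prop :=
  I.IsMatching M ∧ Noncrossing M ∧ ∀ m w, ¬ I.Blocks M m w

/-- A weakly stable noncrossing matching: a noncrossing matching admitting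
no noncrossing (weak) blocking pair. -/
def IsWSNM [Preorder Mty] [Preorder Wty] (I : SMTI Mty Wty) (M : Finset (Mty × Wty)) : Prop :=
  I.IsMatching M ∧ Noncrossing M ∧ ∀ m w, ¬ I.NCBlocks M m w

/-- The instance has strict preference lists (no ties), i.e. it is an SMI instance. -/
def NoTies (I : SMTI Mty Wty) : Prop :=
  (∀ m w w', (I.mpref m w).isSome → I.mpref m w = I.mpref m w' → w = w') ∧
  (∀ w m m', (I.wpref w m).isSome → I.wpref w m = I.wpref w m' → m = m')

end SMTI

namespace SMTI

variable {Mty Wty : Type}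

/-- `opt I`: the maximum cardinality of a WSNM of `I`. -/
noncomputable def opt [Preorder Mty] [Preorder Wty] (I : SMTI Mty Wty) : ℕ :=
  sSup {k | ∃ M, I.IsWSNM M ∧ M.card = k}

/-- `p` is the maximum pair of `M`:  it belongs to `M` and dominates every pair
of `M` in both coordinates. -/
def IsMaxPair [Preorder Mty] [Preorder Wty] (M : Finset (Mty × Wty)) (p : Mty × Wty) : Prop :=
  p ∈ M ∧ ∀ q ∈ M, q.1 ≤ p.1 ∧ q.2 ≤ p.2

/-- `M` is a semi-WSNM with maximum pair `p`: a noncrossing matching whose maximum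
pair is `p` and all of whose noncrossing blocking pairs lie (weakly) beyond `p` in
both coordinates. -/
def IsSemiWSNMWith [Preorder Mty] [Preorder Wty] (I : SMTI Mty Wty)
    (M : Finset (Mty × Wty)) (p : Mty × Wty) : Prop :=
  I.IsMatching M ∧ Noncrossing M ∧ IsMaxPair M p ∧
    ∀ m w, I.NCBlocks M m w → p.1 ≤ m ∧ p.2 ≤ w

/-- `M` is a semi-WSNM (with some maximum pair). -/
def IsSemiWSNM [Preorder Mty] [Preorder Wty] (I : SMTI Mty Wty)
    (M : Finset (Mty × Wty)) : Prop :=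
  ∃ p, I.IsSemiWSNMWith M p

/-- The padded instance: new man `m₀` and woman `w₀` on top, new man `m_{n+1}` and
woman `w_{n+1}` at the bottom; `m₀` and `w₀` list only each other, and so do
`m_{n+1}` and `w_{n+1}`; all other lists are as in the original instance
(original person `i`, `1 ≤ i ≤ n`, becomes index `i` of `Fin (n+2)`). -/
def padded {n : ℕ} (I : SMTI (Fin n) (Fin n)) : SMTI (Fin (n + 2)) (Fin (n + 2)) where
  mpref m w :=
    if hm : 0 < m.val ∧ m.val < n + 1 then
      if hw : 0 < w.val ∧ w.val < n + 1 then
        I.mpref ⟨m.val - 1, by omega⟩ ⟨w.val - 1, by omega⟩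
      else none
    else if (m.val = 0 ∧ w.val = 0) ∨ (m.val = n + 1 ∧ w.val = n + 1) then some 0
    else none
  wpref w m :=
    if hw : 0 < w.val ∧ w.val < n + 1 then
      if hm : 0 < m.val ∧ m.val < n + 1 then
        I.wpref ⟨w.val - 1, by omega⟩ ⟨m.val - 1, by omega⟩
      else none
    else if (m.val = 0 ∧ w.val = 0) ∨ (m.val = n + 1 ∧ w.val = n + 1) then some 0
    else none

/-- The embedding of a pair of the original instance into the padded instance. -/
def emb {n : ℕ} (p : Fin n × Fin n) : Fin (n + 2) × Fin (n + 2) :=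
  (⟨p.1.val + 1, by omega⟩, ⟨p.2.val + 1, by omega⟩)

/-- Pairs `p` and `q` (with `p.1 < q.1` and `p.2 < q.2`) are conflicting if the
matching `{p, q}` admits a blocking pair lying between them in both coordinates. -/
def Conflicting {nm nw : ℕ} (I : SMTI (Fin nm) (Fin nw)) (p q : Fin nm × Fin nw) : Prop :=
  ∃ s t, I.Blocks {p, q} s t ∧ p.1 ≤ s ∧ s ≤ q.1 ∧ p.2 ≤ t ∧ t ≤ q.2

/-- `X I i j`: the maximum size of a semi-WSNM of `I` with maximum pair `(m_i, w_j)`,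
or `⊥` (i.e. `−∞`) if none exists. -/
noncomputable def X {nm nw : ℕ} (I : SMTI (Fin nm) (Fin nw)) (i : Fin nm) (j : Fin nw) :
    WithBot ℕ :=
  if ∃ M, I.IsSemiWSNMWith M (i, j) then
    ((sSup {k | ∃ M, I.IsSemiWSNMWith M (i, j) ∧ M.card = k} : ℕ) : WithBot ℕ)
  else ⊥

end SMTI

namespace SMTI

variable {N : ℕ}

lemma crossing_self {Mty Wty : Type} [Preorder Mty] [Preorder Wty] (p : Mty × Wty) :
    ¬ Crossing p p := by
  rintro (⟨h, -⟩ | ⟨h, -⟩) <;> exact lt_irrefl _ h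

lemma rk_lt_top_of_isSome {o : Option ℕ} (h : o.isSome) : rk o < ⊤ := by
  rcases o with - | r
  · simp at h
  · exact WithTop.coe_lt_top r

/-- The key invariant maintained by the blocking-pair-satisfaction process:
every blocking pair `(u, v)` (crossing or not) such that `v`'s partner is below `u`
or `u`'s partner is above `v` is crossed by a pair of `M` lying below-left of it. -/
def Inv (I : SMTI (Fin N) (Fin N)) (M : Finset (Fin N × Fin N)) : Prop :=
  ∀ u v, I.Blocks M u v →
    ((∃ a, (a, v) ∈ M ∧ u < a) ∨ (∃ b, (u, b) ∈ M ∧ b < v)) →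
    ∃ p ∈ M, u < p.1 ∧ p.2 < v

/-- Women's satisfaction vector: entry `j` is the rank `w_j` assigns to her partner,
`⊤` if single. -/
noncomputable def ew (I : SMTI (Fin N) (Fin N)) (M : Finset (Fin N × Fin N)) :
    Fin N → ℕ∞ :=
  fun j => (M.filter (fun p => p.2 = j)).inf (fun p => rk (I.wpref j p.1))

lemma step_lemma (I : SMTI (Fin N) (Fin N)) (M : Finset (Fin N × Fin N))
    (hmat : I.IsMatching M) (hnc : Noncrossing M) (hinv : Inv I M)
    (hbl : ∃ s t, I.NCBlocks M s t) :
    ∃ M', I.IsMatching M' ∧ Noncrossing M' ∧ Inv I M' ∧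
      toLex (ew I M') < toLex (ew I M) := by
  classical
  obtain ⟨s0, t0, hbl0⟩ := hbl
  set S : Finset (Fin N) := Finset.univ.filter (fun s => ∃ t, I.NCBlocks M s t) with hSdef
  have hs0S : s0 ∈ S := Finset.mem_filter.2 ⟨Finset.mem_univ _, t0, hbl0⟩
  have hSne : S.Nonempty := ⟨s0, hs0S⟩
  set s : Fin N := S.min' hSne with hsdef
  have hsS : s ∈ S := S.min'_mem hSne
  have hmin : ∀ u v, I.NCBlocks M u v → s ≤ u := fun u v h =>
    S.min'_le u (Finset.mem_filter.2 ⟨Finset.mem_univ _, v, h⟩)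
  obtain ⟨t1, ht1⟩ : ∃ t, I.NCBlocks M s t := (Finset.mem_filter.1 hsS).2
  set T : Finset (Fin N) := Finset.univ.filter (fun v => I.NCBlocks M s v) with hTdef
  have hTne : T.Nonempty := ⟨t1, Finset.mem_filter.2 ⟨Finset.mem_univ _, ht1⟩⟩
  obtain ⟨t, htT, hfavT⟩ := T.exists_min_image (fun v => rk (I.mpref s v)) hTne
  have hst : I.NCBlocks M s t := (Finset.mem_filter.1 htT).2
  have hfav : ∀ v, I.NCBlocks M s v → rk (I.mpref s t) ≤ rk (I.mpref s v) := fun v h =>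
    hfavT v (Finset.mem_filter.2 ⟨Finset.mem_univ _, h⟩)
  obtain ⟨hb, hncb⟩ := hst
  obtain ⟨hbacc, hbnm, hbm, hbw⟩ := hb
  -- F4: any partner of t is above s
  have F4 : ∀ a, (a, t) ∈ M → a < s := by
    intro a haM
    rcases lt_trichotomy a s with h | h | h
    · exact h
    · exact absurd (h ▸ haM) hbnm
    · obtain ⟨p, hpM, hp1, hp2⟩ := hinv s t ⟨hbacc, hbnm, hbm, hbw⟩ (Or.inl ⟨a, haM, h⟩)
      exact absurd (Or.inl ⟨hp1, hp2⟩) (hncb p hpM)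
  -- F5: any partner of s is below t
  have F5 : ∀ b, (s, b) ∈ M → t < b := by
    intro b hbM
    rcases lt_trichotomy t b with h | h | h
    · exact h
    · exact absurd (h ▸ hbM) hbnm
    · obtain ⟨p, hpM, hp1, hp2⟩ := hinv s t ⟨hbacc, hbnm, hbm, hbw⟩ (Or.inr ⟨b, hbM, h⟩)
      exact absurd (Or.inl ⟨hp1, hp2⟩) (hncb p hpM)
  set M' : Finset (Fin N × Fin N) :=
    insert (s, t) (M.filter (fun p => p.1 ≠ s ∧ p.2 ≠ t)) with hM'def
  have hmem : ∀ p : Fin N × Fin N,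
      p ∈ M' ↔ p = (s, t) ∨ (p ∈ M ∧ p.1 ≠ s ∧ p.2 ≠ t) := by
    intro p
    simp [hM'def, Finset.mem_insert, Finset.mem_filter, and_assoc]
  have hstM' : (s, t) ∈ M' := (hmem _).2 (Or.inl rfl)
  -- M' is a matching
  have hmat' : I.IsMatching M' := by
    constructor
    · intro p hp
      rcases (hmem p).1 hp with h | ⟨hpM, -, -⟩
      · rw [h]; exact hbacc
      · exact hmat.1 p hpM
    · intro p hp q hq hpq
      rcases (hmem p).1 hp with hp' | ⟨hpM, hp1, hp2⟩ <;>
        rcases (hmem q).1 hq with hq' | ⟨hqM, hq1, hq2⟩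
      · rw [hp', hq']
      · exfalso; rw [hp'] at hpq
        rcases hpq with h | h
        · exact hq1 h.symm
        · exact hq2 h.symm
      · exfalso; rw [hq'] at hpq
        rcases hpq with h | h
        · exact hp1 h
        · exact hp2 h
      · exact hmat.2 p hpM q hqM hpq
  -- M' is noncrossing
  have hnc' : Noncrossing M' := by
    intro p hp q hq
    rcases (hmem p).1 hp with hp' | ⟨hpM, -, -⟩ <;>
      rcases (hmem q).1 hq with hq' | ⟨hqM, -, -⟩
    · rw [hp', hq']; exact crossing_self _
    · rw [hp']; exact hncb q hqM
    · rw [hq']; intro h; exact hncb p hpM (or_comm.1 h)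
    · exact hnc p hpM q hqM
  refine ⟨M', hmat', hnc', ?_, ?_⟩
  · -- Inv I M'
    intro u v huv hC
    obtain ⟨hacc, hnm, hmc, hwc⟩ := huv
    by_cases hvt : v = t
    · subst hvt
      by_cases hus : u = s
      · exact absurd hstM' (hus ▸ hnm)
      · have hwus : rk (I.wpref v u) < rk (I.wpref v s) := hwc s hstM'
        by_cases hutM : (u, v) ∈ M
        · exact absurd hwus (not_lt.2 (le_of_lt (hbw u hutM)))
        · have hBut : I.Blocks M u v := by
            refine ⟨hacc, hutM, ?_, ?_⟩
            · intro b hbM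
              have hbt : b ≠ v := fun h => hutM (h ▸ hbM)
              exact hmc b ((hmem _).2 (Or.inr ⟨hbM, hus, hbt⟩))
            · intro a haM
              exact lt_trans hwus (hbw a haM)
          rcases lt_trichotomy u s with hlt | heq | hgt
          · by_cases hncu : ∀ q ∈ M, ¬ Crossing (u, v) q
            · exact absurd (hmin u v ⟨hBut, hncu⟩) (not_le.2 hlt)
            · push_neg at hncu
              obtain ⟨q, hqM, hcr⟩ := hncu
              rcases hcr with ⟨h1, h2⟩ | ⟨h1, h2⟩
              · have hq1s : q.1 ≠ s := by
                  intro h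
                  have : (s, q.2) ∈ M := by
                    rw [← h]; exact (Prod.mk.eta (p := q)) ▸ hqM
                  exact absurd (F5 q.2 this) (not_lt.2 (le_of_lt h2))
                exact ⟨q, (hmem _).2 (Or.inr ⟨hqM, hq1s, ne_of_lt h2⟩), h1, h2⟩
              · exact absurd (Or.inr ⟨lt_trans h1 hlt, h2⟩) (hncb q hqM)
          · exact absurd heq hus
          · rcases hC with ⟨a, haM', hua⟩ | ⟨b, hbM', hbv⟩
            · rcases (hmem _).1 haM' with h | ⟨-, -, h2⟩
              · have : a = s := congrArg Prod.fst h
                exact absurd (this ▸ hua) (not_lt.2 (le_of_lt hgt))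
              · exact absurd rfl h2
            · rcases (hmem _).1 hbM' with h | ⟨hbM, -, -⟩
              · exact absurd (congrArg Prod.fst h) hus
              · exact absurd (Or.inl ⟨hgt, hbv⟩) (hncb (u, b) hbM)
    · by_cases hus : u = s
      · subst hus
        have hmst : rk (I.mpref s v) < rk (I.mpref s t) := hmc t hstM'
        have hsvM : (s, v) ∉ M := fun h => absurd (hbm v h) (not_lt.2 (le_of_lt hmst))
        have hBsv : I.Blocks M s v := by
          refine ⟨hacc, hsvM, ?_, ?_⟩
          · intro b hbM
            exact lt_trans hmst (hbm b hbM)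
          · intro a haM
            have has : a ≠ s := fun h => hsvM (h ▸ haM)
            exact hwc a ((hmem _).2 (Or.inr ⟨haM, has, hvt⟩))
        by_cases hncv : ∀ q ∈ M, ¬ Crossing (s, v) q
        · exact absurd (hfav v ⟨hBsv, hncv⟩) (not_le.2 hmst)
        · push_neg at hncv
          obtain ⟨q, hqM, hcr⟩ := hncv
          rcases hcr with ⟨h1, h2⟩ | ⟨h1, h2⟩
          · have hq2t : q.2 ≠ t := by
              intro h
              have : (q.1, t) ∈ M := by rw [← h]; exact (Prod.mk.eta (p := q)) ▸ hqM
              exact absurd (F4 q.1 this) (not_lt.2 (le_of_lt h1))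
            exact ⟨q, (hmem _).2 (Or.inr ⟨hqM, ne_of_gt h1, hq2t⟩), h1, h2⟩
          · have hq2le : q.2 ≤ t := by
              by_contra h
              exact hncb q hqM (Or.inr ⟨h1, not_le.1 h⟩)
            have hvlt : v < t := lt_of_lt_of_le h2 hq2le
            rcases hC with ⟨a, haM', hsa⟩ | ⟨b, hbM', hbv⟩
            · rcases (hmem _).1 haM' with h | ⟨haM, -, -⟩
              · exact absurd (congrArg Prod.snd h) hvt
              · exact absurd (Or.inl ⟨hsa, hvlt⟩) (hncb (a, v) haM)
            · rcases (hmem _).1 hbM' with h | ⟨-, h1', -⟩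
              · have : b = t := congrArg Prod.snd h
                exact absurd (this ▸ hbv) (not_lt.2 (le_of_lt hvlt))
              · exact absurd rfl h1'
      · by_cases hwin : u < s ∧ t < v
        · exact ⟨(s, t), hstM', hwin.1, hwin.2⟩
        · by_cases hutM : (u, t) ∈ M
          · have hus' : u < s := F4 u hutM
            have hvlt : v < t :=
              lt_of_le_of_ne (not_lt.1 fun h => hwin ⟨hus', h⟩) hvt
            rcases hC with ⟨a, haM', hua⟩ | ⟨b, hbM', hbv⟩
            · rcases (hmem _).1 haM' with h | ⟨haM, -, -⟩
              · exact absurd (congrArg Prod.snd h) hvt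
              · exact absurd (Or.inl ⟨hua, hvlt⟩) (hnc (u, t) hutM (a, v) haM)
            · rcases (hmem _).1 hbM' with h | ⟨hbM, -, hb2⟩
              · exact absurd (congrArg Prod.fst h) hus
              · have : (u, b) = (u, t) := hmat.2 _ hbM _ hutM (Or.inl rfl)
                exact absurd (congrArg Prod.snd this) hb2
          · by_cases hsvM : (s, v) ∈ M
            · have htv : t < v := F5 v hsvM
              have hsu : s < u :=
                lt_of_le_of_ne (not_lt.1 fun h => hwin ⟨h, htv⟩) (Ne.symm hus)
              rcases hC with ⟨a, haM', hua⟩ | ⟨b, hbM', hbv⟩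
              · rcases (hmem _).1 haM' with h | ⟨haM, ha1, -⟩
                · exact absurd (congrArg Prod.snd h) hvt
                · have : (a, v) = (s, v) := hmat.2 _ haM _ hsvM (Or.inr rfl)
                  exact absurd (congrArg Prod.fst this) ha1
              · rcases (hmem _).1 hbM' with h | ⟨hbM, -, hb2⟩
                · exact absurd (congrArg Prod.fst h) hus
                · exact absurd (Or.inl ⟨hsu, hbv⟩) (hnc (s, v) hsvM (u, b) hbM)
            · have hnuv : (u, v) ∉ M := fun h =>
                hnm ((hmem _).2 (Or.inr ⟨h, hus, hvt⟩))
              have hBuv : I.Blocks M u v := by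
                refine ⟨hacc, hnuv, ?_, ?_⟩
                · intro b hbM
                  have hbt : b ≠ t := fun h => hutM (h ▸ hbM)
                  exact hmc b ((hmem _).2 (Or.inr ⟨hbM, hus, hbt⟩))
                · intro a haM
                  have has : a ≠ s := fun h => hsvM (h ▸ haM)
                  exact hwc a ((hmem _).2 (Or.inr ⟨haM, has, hvt⟩))
              have hCM : (∃ a, (a, v) ∈ M ∧ u < a) ∨ (∃ b, (u, b) ∈ M ∧ b < v) := by
                rcases hC with ⟨a, haM', hua⟩ | ⟨b, hbM', hbv⟩
                · rcases (hmem _).1 haM' with h | ⟨haM, -, -⟩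
                  · exact absurd (congrArg Prod.snd h) hvt
                  · exact Or.inl ⟨a, haM, hua⟩
                · rcases (hmem _).1 hbM' with h | ⟨hbM, -, -⟩
                  · exact absurd (congrArg Prod.fst h) hus
                  · exact Or.inr ⟨b, hbM, hbv⟩
              obtain ⟨p, hpM, hup, hpv⟩ := hinv u v hBuv hCM
              by_cases hp1 : p.1 = s
              · have hpM2 : (s, p.2) ∈ M := by
                  rw [← hp1]; exact (Prod.mk.eta (p := p)) ▸ hpM
                exact ⟨(s, t), hstM', hp1 ▸ hup, lt_trans (F5 p.2 hpM2) hpv⟩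
              · by_cases hp2 : p.2 = t
                · have hpM1 : (p.1, t) ∈ M := by
                    rw [← hp2]; exact (Prod.mk.eta (p := p)) ▸ hpM
                  exact ⟨(s, t), hstM', lt_trans hup (F4 p.1 hpM1), hp2 ▸ hpv⟩
                · exact ⟨p, (hmem _).2 (Or.inr ⟨hpM, hp1, hp2⟩), hup, hpv⟩
  · -- measure decreases
    have hfil : M'.filter (fun p => p.2 = t) = {(s, t)} := by
      ext p
      simp only [Finset.mem_filter, Finset.mem_singleton]
      constructor
      · rintro ⟨hp, hp2⟩
        rcases (hmem p).1 hp with h | ⟨-, -, h2⟩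
        · exact h
        · exact absurd hp2 h2
      · rintro rfl
        exact ⟨hstM', rfl⟩
    have hewt' : ew I M' t = rk (I.wpref t s) := by
      rw [ew, hfil, Finset.inf_singleton]
    have hewlt : ew I M' t < ew I M t := by
      rw [hewt']
      have htop : rk (I.wpref t s) < ⊤ := rk_lt_top_of_isSome hbacc.2
      rw [ew]
      refine Finset.lt_inf_iff htop |>.2 ?_
      intro p hp
      obtain ⟨hpM, hp2⟩ := Finset.mem_filter.1 hp
      have : (p.1, t) ∈ M := by rw [← hp2]; exact (Prod.mk.eta (p := p)) ▸ hpM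
      exact hbw p.1 this
    have heweq : ∀ i, i < t → ew I M' i = ew I M i := by
      intro i hi
      have : M'.filter (fun p => p.2 = i) = M.filter (fun p => p.2 = i) := by
        ext p
        simp only [Finset.mem_filter]
        constructor
        · rintro ⟨hp, hp2⟩
          rcases (hmem p).1 hp with h | ⟨hpM, -, -⟩
          · exfalso
            have : p.2 = t := congrArg Prod.snd h
            exact absurd (this ▸ hp2) (ne_of_gt hi)
          · exact ⟨hpM, hp2⟩
        · rintro ⟨hpM, hp2⟩
          refine ⟨(hmem p).2 (Or.inr ⟨hpM, ?_, ?_⟩), hp2⟩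
          · intro h
            have : (s, p.2) ∈ M := by rw [← h]; exact (Prod.mk.eta (p := p)) ▸ hpM
            have := F5 p.2 this
            rw [hp2] at this
            exact absurd hi (not_lt.2 (le_of_lt this))
          · intro h
            exact absurd (h ▸ hp2) (ne_of_gt hi)
      rw [ew, ew, this]
    exact ⟨t, fun j hj => heweq j hj, hewlt⟩

theorem exists_isWSNM (I : SMTI (Fin N) (Fin N)) : ∃ M, I.IsWSNM M := by
  classical
  have wf : WellFounded ((· < ·) : Lex (Fin N → ℕ∞) → Lex (Fin N → ℕ∞) → Prop) :=
    IsWellFounded.wf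
  have H : ∀ μ : Lex (Fin N → ℕ∞), ∀ M : Finset (Fin N × Fin N),
      I.IsMatching M → Noncrossing M → Inv I M → toLex (ew I M) = μ → ∃ W, I.IsWSNM W := by
    intro μ
    induction μ using WellFounded.induction wf with
    | _ μ IH =>
      intro M hmat hnc hinv hμ
      by_cases hbl : ∃ s t, I.NCBlocks M s t
      · obtain ⟨M', h1, h2, h3, hlt⟩ := step_lemma I M hmat hnc hinv hbl
        exact IH _ (hμ ▸ hlt) M' h1 h2 h3 rfl
      · push_neg at hbl
        exact ⟨M, hmat, hnc, fun m w h => hbl m w h⟩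
  refine H (toLex (ew I ∅)) ∅ ⟨?_, ?_⟩ ?_ ?_ rfl
  · intro p hp; exact absurd hp (Finset.notMem_empty p)
  · intro p hp; exact absurd hp (Finset.notMem_empty p)
  · intro p hp; exact absurd hp (Finset.notMem_empty p)
  · intro u v hb hC
    rcases hC with ⟨a, ha, -⟩ | ⟨b, hb', -⟩
    · exact absurd ha (Finset.notMem_empty _)
    · exact absurd hb' (Finset.notMem_empty _)

end SMTI


namespace SMTI

lemma padded_mpref_last_eq {n : ℕ} (I' : SMTI (Fin n) (Fin n)) (w' : Fin (n + 2)) :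
    (padded I').mpref (Fin.last (n + 1)) w' =
      if w' = Fin.last (n + 1) then some 0 else none := by
  have hval : (Fin.last (n + 1) : Fin (n + 2)).val = n + 1 := rfl
  unfold padded
  dsimp only
  rw [dif_neg (by rw [hval]; omega)]
  by_cases h : w' = Fin.last (n + 1)
  · subst h
    rw [if_pos (Or.inr ⟨rfl, rfl⟩), if_pos rfl]
  · rw [if_neg, if_neg h]
    rintro (⟨h0, -⟩ | ⟨-, h1⟩)
    · rw [hval] at h0; omega
    · exact h (Fin.ext (by rw [hval]; omega))

lemma padded_wpref_last_eq {n : ℕ} (I' : SMTI (Fin n) (Fin n)) (m' : Fin (n + 2)) :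
    (padded I').wpref (Fin.last (n + 1)) m' =
      if m' = Fin.last (n + 1) then some 0 else none := by
  have hval : (Fin.last (n + 1) : Fin (n + 2)).val = n + 1 := rfl
  unfold padded
  dsimp only
  rw [dif_neg (by rw [hval]; omega)]
  by_cases h : m' = Fin.last (n + 1)
  · subst h
    rw [if_pos (Or.inr ⟨rfl, rfl⟩), if_pos rfl]
  · rw [if_neg, if_neg h]
    rintro (⟨-, h0⟩ | ⟨h1, -⟩)
    · rw [hval] at h0; omega
    · exact h (Fin.ext (by rw [hval]; omega))

end SMTI

/-- for the padded instance `I` of an SMI instance, a matching `M` is a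
WSNM of `I` iff it is a semi-WSNM of `I` with maximum pair `(m_{n+1}, w_{n+1})`;
consequently `opt I = X(n+1, n+1)`. -/
theorem stmt11 {n : ℕ} (I' : SMTI (Fin n) (Fin n)) (hI' : I'.NoTies) :
    (∀ M : Finset (Fin (n + 2) × Fin (n + 2)),
      (SMTI.padded I').IsWSNM M ↔
        (SMTI.padded I').IsSemiWSNMWith M (Fin.last (n + 1), Fin.last (n + 1))) ∧
    ((SMTI.padded I').opt : WithBot ℕ) =
      SMTI.X (SMTI.padded I') (Fin.last (n + 1)) (Fin.last (n + 1)) := by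
  have hiff : ∀ M : Finset (Fin (n + 2) × Fin (n + 2)),
      (SMTI.padded I').IsWSNM M ↔
        (SMTI.padded I').IsSemiWSNMWith M (Fin.last (n + 1), Fin.last (n + 1)) := by
    intro M
    constructor
    · rintro ⟨hmat, hnc, hnb⟩
      have hmem : (Fin.last (n + 1), Fin.last (n + 1)) ∈ M := by
        by_contra hmemn
        refine hnb (Fin.last (n + 1)) (Fin.last (n + 1)) ⟨⟨?_, hmemn, ?_, ?_⟩, ?_⟩
        · constructor
          · rw [SMTI.padded_mpref_last_eq, if_pos rfl]; rfl
          · rw [SMTI.padded_wpref_last_eq, if_pos rfl]; rfl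
        · intro w' hw'
          exfalso
          have hacc := (hmat.1 _ hw').1
          rw [SMTI.padded_mpref_last_eq] at hacc
          by_cases h : w' = Fin.last (n + 1)
          · exact absurd (h ▸ hw') hmemn
          · rw [if_neg h] at hacc; exact (by simp at hacc)
        · intro m' hm'
          exfalso
          have hacc := (hmat.1 _ hm').2
          rw [SMTI.padded_wpref_last_eq] at hacc
          by_cases h : m' = Fin.last (n + 1)
          · exact absurd (h ▸ hm') hmemn
          · rw [if_neg h] at hacc; exact (by simp at hacc)
        · intro q hq
          rintro (⟨h, -⟩ | ⟨-, h⟩)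
          · exact absurd h (not_lt.2 (Fin.le_last _))
          · exact absurd h (not_lt.2 (Fin.le_last _))
      exact ⟨hmat, hnc, ⟨hmem, fun q _ => ⟨Fin.le_last _, Fin.le_last _⟩⟩,
        fun m w h => absurd h (hnb m w)⟩
    · rintro ⟨hmat, hnc, hmax, hsemi⟩
      refine ⟨hmat, hnc, fun m w hblk => ?_⟩
      obtain ⟨h1, h2⟩ := hsemi m w hblk
      have hm : m = Fin.last (n + 1) := le_antisymm (Fin.le_last m) h1
      have hw : w = Fin.last (n + 1) := le_antisymm (Fin.le_last w) h2
      subst hm; subst hw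
      exact hblk.1.2.1 hmax.1
  refine ⟨hiff, ?_⟩
  have hex : ∃ M, (SMTI.padded I').IsSemiWSNMWith M (Fin.last (n + 1), Fin.last (n + 1)) := by
    obtain ⟨M, hM⟩ := SMTI.exists_isWSNM (SMTI.padded I')
    exact ⟨M, (hiff M).1 hM⟩
  rw [SMTI.X, if_pos hex]
  have hset : {k | ∃ M, (SMTI.padded I').IsWSNM M ∧ M.card = k} =
      {k | ∃ M, (SMTI.padded I').IsSemiWSNMWith M
        (Fin.last (n + 1), Fin.last (n + 1)) ∧ M.card = k} := by
    ext k
    simp only [Set.mem_setOf_eq]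
    exact exists_congr fun M => and_congr_left' (hiff M)
  rw [SMTI.opt, hset]
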